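/- For β ∈ (0, ∞) and N > 0, with ψ_N(x) = (ln(e + β + |x|))^β for |x| < N and ψ_N(x) = (ln(e + β + N))^β for |x| ≥ N, there exists a constant C_β depending only on β (not on N) such that for all x ∈ ℝ, ψ_N(x) · ∫_ℝ e^{-|x-y|} / ψ_N(y) dy ≤ C_β. -/

import Mathlib

open Real MeasureTheory Set

/-- The truncated logarithmic weight. -/
noncomputable def psiWeight (β N x : ℝ) : ℝ :=
  if |x| < N then (Real.log (Real.exp 1 + β + |x|)) ^ β
  else (Real.log (Real.exp 1 + β + N)) ^ β

lemma psiWeight_eq_min (β N x : ℝ) :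
    psiWeight β N x = (Real.log (Real.exp 1 + β + min |x| N)) ^ β := by
  unfold psiWeight
  split_ifs with h
  · rw [min_eq_left h.le]
  · rw [min_eq_right (not_lt.1 h)]

lemma one_le_log_aux (β : ℝ) (hβ : 0 < β) {t : ℝ} (ht : 0 ≤ t) :
    1 ≤ Real.log (Real.exp 1 + β + t) := by
  have h1 : Real.exp 1 ≤ Real.exp 1 + β + t := by linarith
  calc (1 : ℝ) = Real.log (Real.exp 1) := (Real.log_exp 1).symm
    _ ≤ _ := Real.log_le_log (Real.exp_pos 1) h1

lemma one_le_psiWeight (β : ℝ) (hβ : 0 < β) (N : ℝ) (hN : 0 < N) (x : ℝ) :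
    1 ≤ psiWeight β N x := by
  rw [psiWeight_eq_min]
  have hm : 0 ≤ min |x| N := le_min (abs_nonneg x) hN.le
  exact Real.one_le_rpow (one_le_log_aux β hβ hm) hβ.le

/-- ratio bound -/
lemma psiWeight_ratio (β : ℝ) (hβ : 0 < β) (N : ℝ) (hN : 0 < N) (x y : ℝ) :
    psiWeight β N x ≤ (1 + |x - y|) ^ β * psiWeight β N y := by
  rw [psiWeight_eq_min, psiWeight_eq_min]
  set a := min |x| N with ha
  set b := min |y| N with hb
  have hab : a - b ≤ |x - y| := by
    have h1 : |x| - |y| ≤ |x - y| := abs_sub_abs_le_abs_sub x y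
    rcases le_total |x| N with h2 | h2 <;> rcases le_total |y| N with h3 | h3 <;>
      simp only [ha, hb, min_eq_left, min_eq_right, h2, h3] <;> linarith [abs_nonneg (x - y)]
  have hb0 : 0 ≤ b := le_min (abs_nonneg y) hN.le
  have ha0 : 0 ≤ a := le_min (abs_nonneg x) hN.le
  have hd : 0 ≤ |x - y| := abs_nonneg _
  have hv : (1:ℝ) ≤ Real.exp 1 + β + b := by
    have := Real.add_one_le_exp 1; linarith
  have hvpos : (0:ℝ) < Real.exp 1 + β + b := by linarith
  have hupos : (0:ℝ) < Real.exp 1 + β + b + |x - y| := by linarith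
  -- log(e+β+a) ≤ log(e+β+b) + |x-y|
  have hlog : Real.log (Real.exp 1 + β + a) ≤ Real.log (Real.exp 1 + β + b) + |x - y| := by
    have h1 : Real.log (Real.exp 1 + β + a) ≤ Real.log (Real.exp 1 + β + b + |x - y|) := by
      have he := Real.exp_pos 1
      apply Real.log_le_log (by linarith) (by linarith)
    have h2 : Real.log (Real.exp 1 + β + b + |x - y|) - Real.log (Real.exp 1 + β + b)
        ≤ |x - y| := by
      rw [← Real.log_div (ne_of_gt hupos) (ne_of_gt hvpos)]
      have h3 := Real.log_le_sub_one_of_pos (div_pos hupos hvpos)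
      have h4 : (Real.exp 1 + β + b + |x - y|) / (Real.exp 1 + β + b) - 1
          = |x - y| / (Real.exp 1 + β + b) := by field_simp; ring
      have h5 : |x - y| / (Real.exp 1 + β + b) ≤ |x - y| := by
        apply div_le_self hd hv
      linarith
    linarith
  have hlb : 1 ≤ Real.log (Real.exp 1 + β + b) := one_le_log_aux β hβ hb0
  have hla : 0 ≤ Real.log (Real.exp 1 + β + a) := le_trans zero_le_one (one_le_log_aux β hβ ha0)
  have key : Real.log (Real.exp 1 + β + a) ≤ (1 + |x - y|) * Real.log (Real.exp 1 + β + b) := by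
    have : |x - y| ≤ |x - y| * Real.log (Real.exp 1 + β + b) := le_mul_of_one_le_right hd hlb
    nlinarith
  calc Real.log (Real.exp 1 + β + a) ^ β
      ≤ ((1 + |x - y|) * Real.log (Real.exp 1 + β + b)) ^ β :=
        Real.rpow_le_rpow hla key hβ.le
    _ = (1 + |x - y|) ^ β * Real.log (Real.exp 1 + β + b) ^ β :=
        Real.mul_rpow (by linarith) (by linarith)

/-- `(1+t)^β ≤ K e^{t/2}` for `t ≥ 0`. -/
lemma rpow_le_exp_half (β : ℝ) (hβ : 0 < β) {t : ℝ} (ht : 0 ≤ t) :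
    (1 + t) ^ β ≤ Real.exp (1/2 - β + β * Real.log (2*β)) * Real.exp (t/2) := by
  have h1 : (0:ℝ) < 1 + t := by linarith
  have h2 : (0:ℝ) < 2*β := by linarith
  have hlog : Real.log (1 + t) ≤ (1 + t)/(2*β) - 1 + Real.log (2*β) := by
    have h3 := Real.log_le_sub_one_of_pos (div_pos h1 h2)
    have h4 : Real.log ((1+t)/(2*β)) = Real.log (1+t) - Real.log (2*β) :=
      Real.log_div (ne_of_gt h1) (ne_of_gt h2)
    linarith
  have : β * Real.log (1 + t) ≤ t/2 + 1/2 - β + β * Real.log (2*β) := by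
    have h5 : β * ((1 + t)/(2*β) - 1 + Real.log (2*β))
        = (1+t)/2 - β + β * Real.log (2*β) := by field_simp
    nlinarith [mul_le_mul_of_nonneg_left hlog hβ.le]
  calc (1 + t) ^ β = Real.exp (β * Real.log (1 + t)) := by
        rw [Real.rpow_def_of_pos h1, mul_comm]
    _ ≤ Real.exp (t/2 + 1/2 - β + β * Real.log (2*β)) := Real.exp_le_exp.2 this
    _ = Real.exp (1/2 - β + β * Real.log (2*β)) * Real.exp (t/2) := by
        rw [← Real.exp_add]; congr 1; ring

lemma integrable_exp_neg_half_abs : Integrable (fun t : ℝ => Real.exp (-(|t|/2))) := by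
  have h1 : IntegrableOn (fun t : ℝ => Real.exp (-(|t|/2))) (Ioi 0) := by
    apply (exp_neg_integrableOn_Ioi 0 (by norm_num : (0:ℝ) < 1/2)).congr_fun ?_ measurableSet_Ioi
    intro t ht
    show Real.exp (-(1/2) * t) = Real.exp (-(|t|/2))
    rw [abs_of_pos (mem_Ioi.1 ht)]
    ring_nf
  have h3 : IntegrableOn (fun t : ℝ => Real.exp (-(|t|/2))) (Ici 0) :=
    h1.congr_set_ae Ioi_ae_eq_Ici.symm
  have h4 : Integrable ((Ici (0:ℝ)).indicator (fun t : ℝ => Real.exp (-(|t|/2)))) volume :=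
    (integrable_indicator_iff measurableSet_Ici).2 h3
  have h5 := h4.comp_neg
  have h6 : (fun t : ℝ => ((Ici (0:ℝ)).indicator (fun t : ℝ => Real.exp (-(|t|/2)))) (-t))
      = (Iic (0:ℝ)).indicator (fun t : ℝ => Real.exp (-(|t|/2))) := by
    ext t
    by_cases ht : t ≤ 0
    · rw [indicator_of_mem (by simpa using ht), indicator_of_mem (mem_Iic.2 ht), abs_neg]
    · rw [indicator_of_notMem (by simpa using ht), indicator_of_notMem (by simpa using ht)]
  rw [h6] at h5
  have h2 : IntegrableOn (fun t : ℝ => Real.exp (-(|t|/2))) (Iic 0) :=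
    (integrable_indicator_iff measurableSet_Iic).1 h5
  have := h2.union h3
  rw [Iic_union_Ici] at this
  rwa [← integrableOn_univ]

lemma integrable_dom (β : ℝ) (hβ : 0 < β) :
    Integrable (fun t : ℝ => Real.exp (-|t|) * (1 + |t|) ^ β) := by
  apply Integrable.mono'
    (integrable_exp_neg_half_abs.const_mul (Real.exp (1/2 - β + β * Real.log (2*β))))
  · apply Continuous.aestronglyMeasurable
    apply Continuous.mul (by continuity)
    apply Continuous.rpow_const (by continuity)
    intro x; left; positivity
  · filter_upwards with t
    have ht : 0 ≤ |t| := abs_nonneg t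
    have h1 := rpow_le_exp_half β hβ ht
    rw [norm_mul, norm_of_nonneg (Real.exp_pos _).le,
      norm_of_nonneg (Real.rpow_nonneg (by linarith) _)]
    calc Real.exp (-|t|) * (1 + |t|) ^ β
        ≤ Real.exp (-|t|) * (Real.exp (1/2 - β + β * Real.log (2*β)) * Real.exp (|t|/2)) :=
          mul_le_mul_of_nonneg_left h1 (Real.exp_pos _).le
      _ = Real.exp (1/2 - β + β * Real.log (2*β)) * (Real.exp (-|t|) * Real.exp (|t|/2)) := by
          ring
      _ = Real.exp (1/2 - β + β * Real.log (2*β)) * Real.exp (-(|t|/2)) := by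
          rw [← Real.exp_add]; congr 1; ring

theorem psiWeight_convolution_bound (β : ℝ) (hβ : 0 < β) :
    ∃ Cβ : ℝ, ∀ N : ℝ, 0 < N → ∀ x : ℝ,
      psiWeight β N x * (∫ y : ℝ, Real.exp (-|x - y|) / psiWeight β N y) ≤ Cβ := by
  refine ⟨∫ t : ℝ, Real.exp (-|t|) * (1 + |t|) ^ β, fun N hN x => ?_⟩
  rw [← MeasureTheory.integral_const_mul]
  have hint := integrable_dom β hβ
  calc (∫ y : ℝ, psiWeight β N x * (Real.exp (-|x - y|) / psiWeight β N y))
      ≤ ∫ y : ℝ, Real.exp (-|x - y|) * (1 + |x - y|) ^ β := by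
        apply integral_mono_of_nonneg
        · filter_upwards with y
          have h1 := one_le_psiWeight β hβ N hN x
          have h2 := one_le_psiWeight β hβ N hN y
          positivity
        · exact hint.comp_sub_left x
        · filter_upwards with y
          have h2 : (0:ℝ) < psiWeight β N y :=
            lt_of_lt_of_le zero_lt_one (one_le_psiWeight β hβ N hN y)
          rw [mul_div_assoc', div_le_iff₀ h2, mul_comm (psiWeight β N x)]
          rw [mul_assoc]
          exact mul_le_mul_of_nonneg_left
            (psiWeight_ratio β hβ N hN x y) (Real.exp_pos _).le
    _ = ∫ t : ℝ, Real.exp (-|t|) * (1 + |t|) ^ β :=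
        integral_sub_left_eq_self (fun t => Real.exp (-|t|) * (1 + |t|) ^ β) volume x
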